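/- Let k ≥ 3 be an integer and let A be a nonzero positive semidefinite real d×d matrix all of whose entries are integers belonging to {0, 1, …, k}. Then every nonzero eigenvalue of A is at least k^{−d}. -/

import Mathlib

open Polynomial Matrix Finset

private lemma charpoly_unitary_conj {n : ℕ} (U D : Matrix (Fin n) (Fin n) ℝ)
    (h1 : U * star U = 1) :
    (U * D * star U).charpoly = D.charpoly := by
  classical
  set f : Matrix (Fin n) (Fin n) ℝ →+* Matrix (Fin n) (Fin n) ℝ[X] := (Polynomial.C : ℝ →+* ℝ[X]).mapMatrix with hf
  have key : charmatrix (U * D * star U) = f U * charmatrix D * f (star U) := by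
    rw [charmatrix, charmatrix, mul_sub, sub_mul]
    congr 1
    · have comm : Commute (Matrix.scalar (Fin n) (X : ℝ[X])) (f U) :=
        Matrix.scalar_commute _ (fun r => Commute.all _ _) _
      calc Matrix.scalar (Fin n) (X : ℝ[X])
          = Matrix.scalar (Fin n) (X : ℝ[X]) * (f U * f (star U)) := by
            rw [← _root_.map_mul, h1, _root_.map_one, mul_one]
        _ = f U * Matrix.scalar (Fin n) (X : ℝ[X]) * f (star U) := by
            rw [← mul_assoc, comm.eq]
    · show (Polynomial.C : ℝ →+* ℝ[X]).mapMatrix (U * D * star U) = _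
      rw [_root_.map_mul, _root_.map_mul]
  have h2 : (f U).det * (f (star U)).det = 1 := by
    rw [← det_mul, ← _root_.map_mul, h1, _root_.map_one, det_one]
  rw [Matrix.charpoly, Matrix.charpoly, key, det_mul, det_mul]
  linear_combination (D.charmatrix.det) * h2

theorem stmt15 (k d : ℕ) (hk : 3 ≤ k)
    (A : Matrix (Fin d) (Fin d) ℝ) (hA : A ≠ 0) (hpsd : A.PosSemidef)
    (hint : ∀ i j, ∃ z : ℤ, 0 ≤ z ∧ z ≤ (k : ℤ) ∧ A i j = (z : ℝ)) :
    ∀ μ : ℝ, μ ≠ 0 →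
      (∃ v : Fin d → ℝ, v ≠ 0 ∧ A.mulVec v = μ • v) →
      ((k : ℝ) ^ d)⁻¹ ≤ μ := by
  classical
  intro μ hμ hex
  obtain ⟨v, hv, hAv⟩ := hex
  have hkR : (0:ℝ) < (k:ℝ) := by exact_mod_cast (by omega : 0 < k)
  have hherm : A.IsHermitian := hpsd.1
  set lam : Fin d → ℝ := hherm.eigenvalues with hlamdef
  have hnn : ∀ i, 0 ≤ lam i := fun i => hpsd.eigenvalues_nonneg i
  set U : Matrix (Fin d) (Fin d) ℝ := (hherm.eigenvectorUnitary : Matrix (Fin d) (Fin d) ℝ)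
    with hUdef
  have hU1 : U * star U = 1 := Matrix.mem_unitaryGroup_iff.mp hherm.eigenvectorUnitary.2
  have hU2 : star U * U = 1 := Matrix.mem_unitaryGroup_iff'.mp hherm.eigenvectorUnitary.2
  have hspec : A = U * diagonal lam * star U := by
    have h := hherm.spectral_theorem
    rwa [RCLike.ofReal_real_eq_id, Function.id_comp] at h
  -- charpoly of A is the product over eigenvalues
  have cpA : A.charpoly = ∏ i, (X - C (lam i)) := by
    conv_lhs => rw [hspec]
    rw [charpoly_unitary_conj _ _ hU1,
      Matrix.charpoly_of_upperTriangular _ (Matrix.blockTriangular_diagonal lam)]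
    simp
  -- charpoly of A has integer coefficients
  choose z hz0 hzk hzA using hint
  have hBA : (Matrix.of z).map (fun t : ℤ => (t : ℝ)) = A := by
    ext i j; simp [hzA i j]
  have cpB : A.charpoly = (Matrix.of z).charpoly.map (Int.castRingHom ℝ) := by
    rw [← Matrix.charpoly_map]
    congr 1
    exact hBA.symm
  -- μ is an eigenvalue
  have hdet0 : (A - μ • 1).det = 0 := by
    rw [← Matrix.exists_mulVec_eq_zero_iff]
    refine ⟨v, hv, ?_⟩
    rw [Matrix.sub_mulVec, hAv, Matrix.smul_mulVec, Matrix.one_mulVec, sub_self]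
  have hfac : A - μ • 1 = U * diagonal (fun i => lam i - μ) * star U := by
    have hd : diagonal (fun i => lam i - μ) = diagonal lam - μ • 1 := by
      rw [Matrix.smul_one_eq_diagonal]
      rw [← Matrix.diagonal_sub]
    rw [hd, mul_sub, sub_mul, ← hspec]
    congr 1
    rw [mul_smul_comm, smul_mul_assoc, mul_one, hU1]
  have hprod0 : ∏ i, (lam i - μ) = 0 := by
    have := hdet0
    rw [hfac, det_mul, det_mul, det_diagonal] at this
    have hdetU : U.det * (star U).det = 1 := by
      rw [← det_mul, hU1, det_one]
    linear_combination this - (∏ i : Fin d, (lam i - μ)) * hdetU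
  obtain ⟨i₀, -, hi₀⟩ := Finset.prod_eq_zero_iff.mp hprod0
  have hμlam : lam i₀ = μ := by linarith [sub_eq_zero.mp hi₀]
  have hμpos : 0 < μ := lt_of_le_of_ne (hμlam ▸ hnn i₀) (Ne.symm hμ)
  -- the nonzero eigenvalue support
  set S : Finset (Fin d) := Finset.univ.filter (fun i => lam i ≠ 0) with hSdef
  set r : ℕ := S.card with hrdef
  have hrd : r ≤ d := by
    simpa using (Finset.card_filter_le Finset.univ (fun i => lam i ≠ 0))
  have hi₀S : i₀ ∈ S := by
    simp [hSdef, hμlam, hμ]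
  set P : ℝ := ∏ i ∈ S, lam i with hPdef
  have hPpos : 0 < P := Finset.prod_pos (fun i hi => by
    have : lam i ≠ 0 := by simpa [hSdef] using hi
    exact lt_of_le_of_ne (hnn i) (Ne.symm this))
  -- coefficient extraction
  have hcoeff : (∏ i, (X - C (lam i))).coeff (d - r) = (-1 : ℝ) ^ r * P := by
    have h1 : (∏ i : Fin d, (X - C (lam i))) = ∏ i : Fin d, (X + C (- lam i)) := by
      simp [sub_eq_add_neg]
    have h2 := Finset.prod_X_add_C_coeff (Finset.univ) (fun i : Fin d => - lam i)
      (k := d - r) (by simp)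
    rw [h1, h2]
    have hcard : (Finset.univ : Finset (Fin d)).card - (d - r) = r := by
      simp [Nat.sub_sub_self hrd]
    rw [hcard]
    have h3 : ∀ t ∈ Finset.univ.powersetCard r, ∏ i ∈ t, (- lam i)
        = (-1 : ℝ) ^ r * ∏ i ∈ t, lam i := by
      intro t ht
      have htc : t.card = r := (Finset.mem_powersetCard.mp ht).2
      have : ∏ i ∈ t, -lam i = (∏ _i ∈ t, (-1:ℝ)) * ∏ i ∈ t, lam i := by
        rw [← Finset.prod_mul_distrib]
        simp [neg_one_mul]
      rw [this, Finset.prod_const, htc]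
    rw [Finset.sum_congr rfl h3, ← Finset.mul_sum]
    congr 1
    apply Finset.sum_eq_single_of_mem S
    · exact Finset.mem_powersetCard.mpr ⟨Finset.subset_univ _, rfl⟩
    · intro t ht hne
      obtain ⟨-, htc⟩ := Finset.mem_powersetCard.mp ht
      have hnsub : ¬ t ⊆ S := fun hsub =>
        hne (Finset.eq_of_subset_of_card_le hsub (by rw [htc]))
      obtain ⟨i, hit, hiS⟩ := Finset.not_subset.mp hnsub
      refine Finset.prod_eq_zero hit ?_
      by_contra h
      exact hiS (by simp [hSdef, h])
  -- integrality : P ≥ 1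
  have hP1 : 1 ≤ P := by
    set m : ℤ := (Matrix.of z).charpoly.coeff (d - r) with hm
    have : (-1 : ℝ) ^ r * P = (m : ℝ) := by
      rw [← hcoeff, ← cpA, cpB, Polynomial.coeff_map]
      simp [hm]
    have hm0 : m ≠ 0 := by
      intro h
      rw [h, Int.cast_zero] at this
      rcases mul_eq_zero.mp this with h' | h'
      · exact pow_ne_zero r (by norm_num : (-1:ℝ) ≠ 0) h'
      · exact absurd h' (ne_of_gt hPpos)
    have habs : (1 : ℝ) ≤ |(m : ℝ)| := by
      rw [← Int.cast_abs]
      exact_mod_cast Int.one_le_abs hm0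
    calc (1:ℝ) ≤ |(m : ℝ)| := habs
      _ = |(-1 : ℝ) ^ r * P| := by rw [this]
      _ = P := by
          rw [abs_mul, abs_pow, abs_neg, abs_one, one_pow, one_mul, abs_of_pos hPpos]
  -- trace bound
  have htrace : ∑ i, lam i ≤ (d : ℝ) * k := by
    have hsum : ∑ i, lam i = A.trace := by
      rw [hspec, Matrix.trace_mul_cycle, hU2, one_mul, Matrix.trace_diagonal]
    rw [hsum, Matrix.trace]
    calc ∑ i, A.diag i ≤ ∑ _i : Fin d, (k : ℝ) := by
          apply Finset.sum_le_sum
          intro i _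
          rw [Matrix.diag_apply, hzA i i]
          exact_mod_cast hzk i i
      _ = (d : ℝ) * k := by simp [mul_comm]
  -- bound the product of the other eigenvalues
  set S' : Finset (Fin d) := S.erase i₀ with hS'def
  set Q : ℝ := ∏ i ∈ S', lam i with hQdef
  have hQpos : 0 < Q := Finset.prod_pos (fun i hi => by
    have : lam i ≠ 0 := by
      have := Finset.mem_of_mem_erase hi
      simpa [hSdef] using this
    exact lt_of_le_of_ne (hnn i) (Ne.symm this))
  have hPQ : P = μ * Q := by
    rw [hPdef, ← Finset.mul_prod_erase S lam hi₀S, hμlam]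
  set s : ℕ := S'.card with hsdef
  have hsd : s < d := by
    have h1 : s < r := by
      rw [hsdef, hS'def]
      exact Finset.card_erase_lt_of_mem hi₀S
    omega
  have hsum' : ∑ i ∈ S', lam i ≤ (d : ℝ) * k := by
    refine le_trans ?_ htrace
    exact Finset.sum_le_sum_of_subset_of_nonneg (Finset.subset_univ _)
      (fun i _ _ => hnn i)
  have hQbound : Q ≤ (k : ℝ) ^ d := by
    have step1 : Q ≤ ∏ i ∈ S', ((k : ℝ) * Real.exp (lam i / k - 1)) := by
      apply Finset.prod_le_prod (fun i _ => hnn i)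
      intro i _
      have h := Real.add_one_le_exp (lam i / k - 1)
      have : lam i / k ≤ Real.exp (lam i / k - 1) := by linarith
      calc lam i = k * (lam i / k) := by field_simp
        _ ≤ k * Real.exp (lam i / k - 1) := by
            exact mul_le_mul_of_nonneg_left this (le_of_lt hkR)
    have step2 : ∏ i ∈ S', ((k : ℝ) * Real.exp (lam i / k - 1))
        = (k : ℝ) ^ s * Real.exp (∑ i ∈ S', (lam i / k - 1)) := by
      rw [Finset.prod_mul_distrib, Finset.prod_const, Real.exp_sum, hsdef]
    have step3 : ∑ i ∈ S', (lam i / k - 1) ≤ (d : ℝ) - s := by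
      rw [Finset.sum_sub_distrib, Finset.sum_const, hsdef]
      have : ∑ i ∈ S', lam i / k ≤ (d : ℝ) := by
        rw [← Finset.sum_div]
        rw [div_le_iff₀ hkR]
        exact hsum'
      simp only [nsmul_eq_mul, mul_one]
      linarith
    have step4 : Real.exp ((d : ℝ) - s) ≤ (k : ℝ) ^ (d - s) := by
      have hcast : (d : ℝ) - s = ((d - s : ℕ) : ℝ) := by
        rw [Nat.cast_sub (le_of_lt hsd)]
      rw [hcast]
      have he : Real.exp (((d - s : ℕ) : ℝ)) = Real.exp 1 ^ (d - s) := by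
        rw [← Real.exp_nat_mul, mul_one]
      rw [he]
      have h3 : Real.exp 1 ≤ 3 := le_of_lt (by
        calc Real.exp 1 < 2.7182818286 := Real.exp_one_lt_d9
          _ < 3 := by norm_num)
      calc Real.exp 1 ^ (d - s) ≤ (3 : ℝ) ^ (d - s) :=
            pow_le_pow_left₀ (le_of_lt (Real.exp_pos 1)) h3 _
        _ ≤ (k : ℝ) ^ (d - s) := by
            apply pow_le_pow_left₀ (by norm_num)
            exact_mod_cast hk
    calc Q ≤ (k : ℝ) ^ s * Real.exp (∑ i ∈ S', (lam i / k - 1)) := by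
          rw [← step2]; exact step1
      _ ≤ (k : ℝ) ^ s * (k : ℝ) ^ (d - s) := by
          apply mul_le_mul_of_nonneg_left _ (by positivity)
          exact le_trans (Real.exp_le_exp.mpr step3) step4
      _ = (k : ℝ) ^ d := by
          rw [← pow_add]
          congr 1
          omega
  -- conclude
  have h1Q : 1 / Q ≤ μ := by
    rw [div_le_iff₀ hQpos]
    calc (1:ℝ) ≤ P := hP1
      _ = μ * Q := hPQ
  calc ((k : ℝ) ^ d)⁻¹ = 1 / (k : ℝ) ^ d := (one_div _).symm
    _ ≤ 1 / Q := by
        apply one_div_le_one_div_of_le hQpos hQbound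
    _ ≤ μ := h1Q
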